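/- Let f: R → R be a strictly increasing twice-differentiable function satisfying |f''(z)| ≤ f'(z) for all z in a bounded interval Z. Then for all z₁, z₂ ∈ Z: f'(z₂) exp(−|z₂ − z₁|) ≤ f'(z₁) ≤ f'(z₂) exp(|z₂ − z₁|). -/

import Mathlib

open Real

private lemma flip_exp (u v d : ℝ) (h : u ≤ v * Real.exp d) :
    u * Real.exp (-d) ≤ v := by
  have h1 := mul_le_mul_of_nonneg_right h (le_of_lt (Real.exp_pos (-d)))
  have h2 : v * Real.exp d * Real.exp (-d) = v := by
    rw [mul_assoc, ← Real.exp_add]; simp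
  linarith

/-- Self-concordance transfer lemma. -/
theorem stmt_3 (f : ℝ → ℝ) (a b : ℝ)
    (hmono : StrictMono f)
    (hdiff : ∀ z, DifferentiableAt ℝ f z)
    (hdiff2 : ∀ z, DifferentiableAt ℝ (deriv f) z)
    (hsc : ∀ z ∈ Set.Icc a b, |deriv (deriv f) z| ≤ deriv f z)
    (z₁ z₂ : ℝ) (h₁ : z₁ ∈ Set.Icc a b) (h₂ : z₂ ∈ Set.Icc a b) :
    deriv f z₂ * Real.exp (-|z₂ - z₁|) ≤ deriv f z₁ ∧
      deriv f z₁ ≤ deriv f z₂ * Real.exp |z₂ - z₁| := by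
  have hde : ∀ z : ℝ, DifferentiableAt ℝ (fun t : ℝ => Real.exp (-t)) z := fun z =>
    (Real.differentiable_exp (-z)).comp z (differentiable_neg z)
  have hdiffg : ∀ z, DifferentiableAt ℝ (fun t => deriv f t * Real.exp t) z := fun z =>
    (hdiff2 z).mul (Real.differentiable_exp z)
  have hdiffh : ∀ z, DifferentiableAt ℝ (fun t => deriv f t * Real.exp (-t)) z := fun z =>
    (hdiff2 z).mul (hde z)
  have hgd : ∀ z, deriv (fun t => deriv f t * Real.exp t) z
      = deriv (deriv f) z * Real.exp z + deriv f z * Real.exp z := by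
    intro z
    rw [deriv_fun_mul (hdiff2 z) (Real.differentiable_exp z), Real.deriv_exp]
  have hexd : ∀ z : ℝ, deriv (fun t : ℝ => Real.exp (-t)) z = -Real.exp (-z) := by
    intro z
    have : deriv (fun t : ℝ => Real.exp (-t)) z = Real.exp (-z) * (-1) := by
      rw [show (fun t : ℝ => Real.exp (-t)) = Real.exp ∘ (fun t => -t) from rfl,
        deriv_comp z (Real.differentiable_exp (-z)) (differentiable_neg z),
        Real.deriv_exp, deriv_neg]
    rw [this]; ring
  have hhd : ∀ z, deriv (fun t => deriv f t * Real.exp (-t)) z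
      = deriv (deriv f) z * Real.exp (-z) + deriv f z * (-Real.exp (-z)) := by
    intro z
    rw [deriv_fun_mul (hdiff2 z) (hde z), hexd z]
  have hmonog : MonotoneOn (fun t => deriv f t * Real.exp t) (Set.Icc a b) := by
    apply monotoneOn_of_deriv_nonneg (convex_Icc a b)
      (fun z _ => ((hdiffg z).continuousAt).continuousWithinAt)
      (fun z hz => ((hdiffg z).differentiableWithinAt))
    intro z hz
    rw [interior_Icc] at hz
    rw [hgd z]
    have h := (abs_le.mp (hsc z (Set.Ioo_subset_Icc_self hz))).1
    nlinarith [Real.exp_pos z]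
  have hantih : AntitoneOn (fun t => deriv f t * Real.exp (-t)) (Set.Icc a b) := by
    apply antitoneOn_of_deriv_nonpos (convex_Icc a b)
      (fun z _ => ((hdiffh z).continuousAt).continuousWithinAt)
      (fun z hz => ((hdiffh z).differentiableWithinAt))
    intro z hz
    rw [interior_Icc] at hz
    rw [hhd z]
    have h := (abs_le.mp (hsc z (Set.Ioo_subset_Icc_self hz))).2
    nlinarith [Real.exp_pos (-z)]
  have key : ∀ x ∈ Set.Icc a b, ∀ y ∈ Set.Icc a b, x ≤ y →
      deriv f x ≤ deriv f y * Real.exp (y - x) ∧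
      deriv f y ≤ deriv f x * Real.exp (y - x) := by
    intro x hx y hy hxy
    constructor
    · have h := hmonog hx hy hxy
      rw [Real.exp_sub, ← mul_div_assoc, le_div_iff₀ (Real.exp_pos x)]
      exact h
    · have h := hantih hx hy hxy
      rw [show y - x = -x - -y by ring, Real.exp_sub, ← mul_div_assoc,
        le_div_iff₀ (Real.exp_pos (-y))]
      exact h
  rcases le_total z₁ z₂ with h | h
  · have k := key z₁ h₁ z₂ h₂ h
    rw [abs_of_nonneg (by linarith : (0:ℝ) ≤ z₂ - z₁)]
    exact ⟨flip_exp _ _ _ k.2, k.1⟩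
  · have k := key z₂ h₂ z₁ h₁ h
    rw [abs_of_nonpos (by linarith : z₂ - z₁ ≤ 0),
      show -(z₂ - z₁) = z₁ - z₂ by ring]
    exact ⟨flip_exp _ _ _ k.1, k.2⟩
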